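/- arXiv:2207.11806 — 2 statements merged into one kernel-verified Lean document; each statement's English description precedes it below -/
import Mathlib

section
/- Let p be a prime. For each nonnegative integer n, let t_{p,n} denote the number of permutations in the symmetric group S_n whose order is a power of p (with t_{p,0} = 1). Then in the formal power series ring ℚ[[x]] one has exp( Σ_{n ≥ 0} x^{p^n} / p^n ) = Σ_{n ≥ 0} (t_{p,n} / n!) x^n; that is, the Artin–Hasse series E_p(x) is the exponential generating function of the numbers t_{p,n}. -/
open scoped Classical

/-- The number of permutations in `S_n` whose order is a power of `p`. -/
noncomputable def pPowerOrderCount (p n : ℕ) : ℕ :=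
  Nat.card {σ : Equiv.Perm (Fin n) // ∃ k : ℕ, orderOf σ = p ^ k}

/-- The formal exponential `exp` composed with a power series `A` (with zero constant
term): the `n`-th coefficient of `exp ∘ A` is `∑_{k=0}^{n} (coeff n of A^k) / k!`
(for `A` with zero constant term, `coeff n (A^k) = 0` when `k > n`). -/
noncomputable def expComp (A : PowerSeries ℚ) : PowerSeries ℚ :=
  PowerSeries.mk fun n =>
    ∑ k ∈ Finset.range (n + 1), (PowerSeries.coeff n (A ^ k)) / (k.factorial : ℚ)

/-- The series `∑_{n ≥ 0} x^{p^n} / p^n ∈ ℚ[[x]]`: its coefficient at `m = p^n`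
is `1/p^n = 1/m`, and all other coefficients vanish.  (Since `p` is prime, the
powers `p^n` are pairwise distinct and nonzero.) -/
noncomputable def artinHasseArg (p : ℕ) : PowerSeries ℚ :=
  PowerSeries.mk fun m => if ∃ n : ℕ, m = p ^ n then 1 / (m : ℚ) else 0

section AuxCombinatorial


open Equiv Equiv.Perm Finset


variable {p : ℕ}

lemma Q_lcm (hp : p.Prime) {a b : ℕ} (ha : ∃ k, a = p ^ k) (hb : ∃ k, b = p ^ k) :
    ∃ k, Nat.lcm a b = p ^ k := by
  obtain ⟨i, rfl⟩ := ha
  obtain ⟨j, rfl⟩ := hb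
  rcases le_total i j with h | h
  · exact ⟨j, Nat.dvd_antisymm (Nat.lcm_dvd (pow_dvd_pow p h) dvd_rfl) (Nat.dvd_lcm_right _ _)⟩
  · exact ⟨i, Nat.dvd_antisymm (Nat.lcm_dvd dvd_rfl (pow_dvd_pow p h)) (Nat.dvd_lcm_left _ _)⟩

lemma Q_of_dvd (hp : p.Prime) {m d : ℕ} (hm : ∃ k, m = p ^ k) (hd : d ∣ m) :
    ∃ k, d = p ^ k := by
  obtain ⟨i, rfl⟩ := hm
  obtain ⟨j, _, rfl⟩ := (Nat.dvd_prime_pow hp).1 hd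
  exact ⟨j, rfl⟩

/-- `permCongr` as a `MulEquiv`. -/
def permCongrMul {α β : Type*} (e : α ≃ β) : Equiv.Perm α ≃* Equiv.Perm β :=
  { Equiv.permCongr e with
    map_mul' := fun σ τ => by
      ext b
      simp [Equiv.permCongr_apply] }

lemma orderOf_permCongr {α β : Type*} (e : α ≃ β) (σ : Equiv.Perm α) :
    orderOf (Equiv.permCongr e σ) = orderOf σ :=
  orderOf_injective (permCongrMul e).toMonoidHom (permCongrMul e).injective σ

lemma count_eq (α : Type*) [Fintype α] [DecidableEq α] :
    Nat.card {σ : Equiv.Perm α // ∃ k : ℕ, orderOf σ = p ^ k}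
      = pPowerOrderCount p (Fintype.card α) := by
  refine Nat.card_congr (Equiv.subtypeEquiv (Equiv.permCongr (Fintype.equivFin α)) fun σ => ?_)
  rw [orderOf_permCongr]

lemma orderOf_ofSubtype {α : Type*} {q : α → Prop} [DecidablePred q]
    (τ : Equiv.Perm (Subtype q)) : orderOf (Equiv.Perm.ofSubtype τ) = orderOf τ := by
  refine orderOf_injective (Equiv.Perm.ofSubtype) (fun a b h => ?_) τ
  ext y
  have h2 : Equiv.Perm.ofSubtype a y.1 = Equiv.Perm.ofSubtype b y.1 := by rw [h]
  simpa [Subtype.ext_iff] using h2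

section Fix

variable {α : Type*} [Fintype α] [DecidableEq α] {s : Finset α} {ρ : Equiv.Perm α}

lemma fix_mem_iff (h : ∀ a ∈ s, ρ a = a) : ∀ y, ρ y ∉ s ↔ y ∉ s := by
  intro y
  have key : ρ y ∈ s ↔ y ∈ s := by
    constructor
    · intro hy
      have h3 : ρ y = y := ρ.injective (h _ hy)
      rwa [← h3]
    · intro hy
      rw [h y hy]; exact hy
  exact not_congr key

lemma fix_ofSubtype_subtypePerm (h : ∀ a ∈ s, ρ a = a) :
    Equiv.Perm.ofSubtype (ρ.subtypePerm (p := fun y => y ∉ s) (fix_mem_iff h)) = ρ :=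
  Equiv.Perm.ofSubtype_subtypePerm _ (fun x hx hmem => hx (h x hmem))

lemma orderOf_subtypePerm_fix (h : ∀ a ∈ s, ρ a = a) :
    orderOf (ρ.subtypePerm (p := fun y => y ∉ s) (fix_mem_iff h)) = orderOf ρ := by
  conv_rhs => rw [← fix_ofSubtype_subtypePerm h]
  rw [orderOf_ofSubtype]

end Fix

/-- Permutations fixing `s` pointwise and with `p`-power order correspond to
`p`-power order permutations of the complement of `s`. -/
noncomputable def fixEquiv {α : Type*} [Fintype α] [DecidableEq α] (s : Finset α) :
    {ρ : Equiv.Perm α // (∃ k : ℕ, orderOf ρ = p ^ k) ∧ ∀ a ∈ s, ρ a = a}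
      ≃ {τ : Equiv.Perm {y : α // y ∉ s} // ∃ k : ℕ, orderOf τ = p ^ k} where
  toFun ρ := ⟨ρ.1.subtypePerm (fix_mem_iff ρ.2.2), by
    rw [orderOf_subtypePerm_fix ρ.2.2]; exact ρ.2.1⟩
  invFun τ := ⟨Equiv.Perm.ofSubtype τ.1,
    ⟨by rw [orderOf_ofSubtype]; exact τ.2,
     fun a ha => Equiv.Perm.ofSubtype_apply_of_not_mem τ.1 (by simpa using ha)⟩⟩
  left_inv ρ := Subtype.ext (fix_ofSubtype_subtypePerm ρ.2.2)
  right_inv τ := by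
    apply Subtype.ext
    have := Equiv.Perm.subtypePerm_ofSubtype τ.1
    exact this ▸ rfl

section CycleCount

variable {α : Type*} [Fintype α] [DecidableEq α]

theorem Equiv.Perm.get_toList (q : Equiv.Perm α) (x : α) (n : ℕ)
    (hn : n < (Equiv.Perm.toList q x).length) :
    (Equiv.Perm.toList q x).get ⟨n, hn⟩ = (q ^ n) x := by
  simp [Equiv.Perm.getElem_toList]

lemma orbitList_eq_toList (x₀ : α) {d : ℕ} (hd : 2 ≤ d) (c : Equiv.Perm α)
    (hcyc : c.IsCycle) (hx : x₀ ∈ c.support) (hcard : c.support.card = d) :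
    (x₀ :: List.ofFn (fun i : Fin (d-1) => (c ^ (i.1+1)) x₀)) = Equiv.Perm.toList c x₀ := by
  have hlen : (Equiv.Perm.toList c x₀).length = d := by
    rw [Equiv.Perm.length_toList, hcyc.cycleOf_eq (Equiv.Perm.mem_support.1 hx), hcard]
  apply List.ext_get
  · simp [hlen]
    omega
  · intro k h1 h2
    match k with
    | 0 =>
      rw [Equiv.Perm.get_toList]
      simp
    | (k+1) =>
      rw [Equiv.Perm.get_toList]
      simp only [List.get_cons_succ]
      rw [List.get_ofFn]
      simp


lemma formPerm_pow_apply_orbit (x₀ : α) {d : ℕ} (hd : 2 ≤ d) (f : Fin (d-1) → α)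
    (hne : ∀ i, f i ≠ x₀) (hinj : Function.Injective f) (i : Fin (d-1)) :
    ((x₀ :: List.ofFn f).formPerm ^ (i.1+1)) x₀ = f i := by
  have hnodup : (x₀ :: List.ofFn f).Nodup := by
    rw [List.nodup_cons]
    refine ⟨?_, (List.nodup_ofFn).2 hinj⟩
    simp only [List.mem_ofFn]
    rintro ⟨j, hj⟩
    exact hne j hj
  have hlen : (x₀ :: List.ofFn f).length = d := by simp; omega
  have h2 : 2 ≤ (x₀ :: List.ofFn f).length := by omega
  have htl := Equiv.Perm.toList_formPerm_nontrivial (x₀ :: List.ofFn f) h2 hnodup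
  have hhead : (x₀ :: List.ofFn f).get ⟨0, by omega⟩ = x₀ := rfl
  rw [hhead] at htl
  have hi1 : i.1 + 1 < (Equiv.Perm.toList (x₀ :: List.ofFn f).formPerm x₀).length := by
    rw [htl]; rw [hlen]; omega
  have hpow : (x₀ :: List.ofFn f).get ⟨i.1+1, htl ▸ hi1⟩
      = ((x₀ :: List.ofFn f).formPerm ^ (i.1+1)) x₀ :=
    (List.get_of_eq htl.symm ⟨i.1+1, htl ▸ hi1⟩).trans
      (Equiv.Perm.get_toList (x₀ :: List.ofFn f).formPerm x₀ (i.1+1) hi1)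
  rw [← hpow]
  simp [List.get_ofFn]

/-- Cycles of length `d ≥ 2` through a fixed point `x₀` biject with embeddings of
`Fin (d-1)` into the complement of `x₀`. -/
noncomputable def cycleThroughEquiv (x₀ : α) (d : ℕ) (hd : 2 ≤ d) :
    {c : Equiv.Perm α // c.IsCycle ∧ x₀ ∈ c.support ∧ c.support.card = d}
      ≃ (Fin (d-1) ↪ {y : α // y ≠ x₀}) where
  toFun c :=
    ⟨fun i => ⟨(c.1 ^ (i.1+1)) x₀, by
      obtain ⟨c, hcyc, hx, hcard⟩ := c
      have hlen : (Equiv.Perm.toList c x₀).length = d := by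
        rw [Equiv.Perm.length_toList, hcyc.cycleOf_eq (Equiv.Perm.mem_support.1 hx), hcard]
      have h1 : i.1 + 1 < (Equiv.Perm.toList c x₀).length := by omega
      have h0 : 0 < (Equiv.Perm.toList c x₀).length := by omega
      intro hEq
      have hg : (Equiv.Perm.toList c x₀).get ⟨i.1+1, h1⟩
          = (Equiv.Perm.toList c x₀).get ⟨0, h0⟩ := by
        rw [Equiv.Perm.get_toList, Equiv.Perm.get_toList]
        simpa using hEq
      have := (List.Nodup.get_inj_iff (Equiv.Perm.nodup_toList c x₀)).1 hg
      simp at this⟩, by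
      intro i j hij
      obtain ⟨c, hcyc, hx, hcard⟩ := c
      have hlen : (Equiv.Perm.toList c x₀).length = d := by
        rw [Equiv.Perm.length_toList, hcyc.cycleOf_eq (Equiv.Perm.mem_support.1 hx), hcard]
      have h1 : i.1 + 1 < (Equiv.Perm.toList c x₀).length := by omega
      have h2 : j.1 + 1 < (Equiv.Perm.toList c x₀).length := by omega
      have hg : (Equiv.Perm.toList c x₀).get ⟨i.1+1, h1⟩
          = (Equiv.Perm.toList c x₀).get ⟨j.1+1, h2⟩ := by
        rw [Equiv.Perm.get_toList, Equiv.Perm.get_toList]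
        simpa [Subtype.ext_iff] using hij
      have := (List.Nodup.get_inj_iff (Equiv.Perm.nodup_toList c x₀)).1 hg
      ext
      simpa using this⟩
  invFun e := by
    have hnodup : (x₀ :: List.ofFn (fun i : Fin (d-1) => ((e i : {y : α // y ≠ x₀}) : α))).Nodup := by
      rw [List.nodup_cons]
      constructor
      · simp only [List.mem_ofFn]
        rintro ⟨i, hi⟩
        exact (e i).2 hi
      · rw [List.nodup_ofFn]
        intro i j h
        exact e.injective (Subtype.ext h)
    have hlen : (x₀ :: List.ofFn (fun i : Fin (d-1) =>
        ((e i : {y : α // y ≠ x₀}) : α))).length = d := by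
      simp
      omega
    have hns : ∀ x : α, (x₀ :: List.ofFn (fun i : Fin (d-1) =>
        ((e i : {y : α // y ≠ x₀}) : α))) ≠ [x] := by
      intro x h
      apply_fun List.length at h
      rw [hlen] at h
      simp at h
      omega
    have hsupp := List.support_formPerm_of_nodup _ hnodup hns
    refine ⟨(x₀ :: List.ofFn (fun i : Fin (d-1) =>
        ((e i : {y : α // y ≠ x₀}) : α))).formPerm, List.isCycle_formPerm hnodup (by omega), ?_, ?_⟩
    · rw [hsupp]
      simp
    · rw [hsupp, List.toFinset_card_of_nodup hnodup, hlen]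
  left_inv c := by
    apply Subtype.ext
    obtain ⟨c, hcyc, hx, hcard⟩ := c
    show List.formPerm (x₀ :: List.ofFn fun i : Fin (d-1) => (c ^ (i.1+1)) x₀) = c
    have hol := orbitList_eq_toList x₀ hd c hcyc hx hcard
    rw [hol, Equiv.Perm.formPerm_toList, hcyc.cycleOf_eq (Equiv.Perm.mem_support.1 hx)]
  right_inv e := by
    apply Function.Embedding.ext
    intro i
    apply Subtype.ext
    show ((x₀ :: List.ofFn fun j : Fin (d-1) => ((e j : {y : α // y ≠ x₀}) : α)).formPerm
        ^ (i.1+1)) x₀ = ((e i : {y : α // y ≠ x₀}) : α)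
    exact formPerm_pow_apply_orbit x₀ hd _ (fun j => (e j).2)
      (fun a b h => e.injective (Subtype.ext h)) i

end CycleCount

section Fiber

variable {α : Type*} [Fintype α] [DecidableEq α] {x₀ : α} {c : Equiv.Perm α}

lemma fix_of_cycleOf (hc : c = 1 ∨ (c.IsCycle ∧ x₀ ∈ c.support)) {σ : Equiv.Perm α}
    (hσ : σ.cycleOf x₀ = c) : ∀ a ∈ insert x₀ c.support, (c⁻¹ * σ) a = a := by
  have happ : ∀ z ∈ c.support, (c⁻¹ * σ) z = z := by
    intro z hz
    have hz' := hz
    rw [← hσ] at hz'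
    have hsc : σ.SameCycle x₀ z := (Equiv.Perm.mem_support_cycleOf_iff.1 hz').1
    have hcz : c z = σ z := by rw [← hσ]; exact hsc.cycleOf_apply
    simp [Equiv.Perm.mul_apply, ← hcz]
  intro a ha
  rcases Finset.mem_insert.1 ha with rfl | hmem
  · rcases hc with rfl | ⟨_, hx⟩
    · have h1 : σ a = a := (Equiv.Perm.cycleOf_eq_one_iff σ).1 hσ
      simp [h1]
    · exact happ _ hx
  · exact happ _ hmem

lemma disjoint_of_fix {ρ : Equiv.Perm α} (h : ∀ a ∈ insert x₀ c.support, ρ a = a) :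
    Equiv.Perm.Disjoint c ρ := by
  intro a
  by_cases ha : a ∈ c.support
  · exact Or.inr (h a (Finset.mem_insert_of_mem ha))
  · exact Or.inl (Equiv.Perm.notMem_support.1 ha)

lemma cycleOf_mul_fix (hc : c = 1 ∨ (c.IsCycle ∧ x₀ ∈ c.support)) {ρ : Equiv.Perm α}
    (h : ∀ a ∈ insert x₀ c.support, ρ a = a) : (c * ρ).cycleOf x₀ = c := by
  have hd := disjoint_of_fix h
  rw [hd.cycleOf_mul_distrib]
  have hρ : ρ.cycleOf x₀ = 1 := (Equiv.Perm.cycleOf_eq_one_iff ρ).2 (h x₀ (Finset.mem_insert_self _ _))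
  rcases hc with rfl | ⟨hcyc, hx⟩
  · simp [hρ]
  · rw [hρ, mul_one, hcyc.cycleOf_eq (Equiv.Perm.mem_support.1 hx)]

lemma pOrder_mul_iff (hp : p.Prime) (hQc : ∃ k, orderOf c = p ^ k) {ρ : Equiv.Perm α}
    (hd : Equiv.Perm.Disjoint c ρ) :
    (∃ k, orderOf (c * ρ) = p ^ k) ↔ (∃ k, orderOf ρ = p ^ k) := by
  rw [hd.orderOf]
  constructor
  · intro h
    exact Q_of_dvd hp h (Nat.dvd_lcm_right _ _)
  · intro h
    exact Q_lcm hp hQc h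

/-- The fiber of `σ ↦ σ.cycleOf x₀` over `c`, within `p`-power order permutations. -/
noncomputable def cycleFiberEquiv (hp : p.Prime) (hc : c = 1 ∨ (c.IsCycle ∧ x₀ ∈ c.support))
    (hQc : ∃ k, orderOf c = p ^ k) :
    {σ : Equiv.Perm α // (∃ k, orderOf σ = p ^ k) ∧ σ.cycleOf x₀ = c}
      ≃ {ρ : Equiv.Perm α // (∃ k, orderOf ρ = p ^ k) ∧ ∀ a ∈ insert x₀ c.support, ρ a = a} where
  toFun σ := ⟨c⁻¹ * σ.1, by
    have hfix := fix_of_cycleOf hc σ.2.2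
    have hd := disjoint_of_fix hfix
    have hmul : c * (c⁻¹ * σ.1) = σ.1 := mul_inv_cancel_left c σ.1
    have hP : ∃ k, orderOf (c * (c⁻¹ * σ.1)) = p ^ k := by rw [hmul]; exact σ.2.1
    exact ⟨(pOrder_mul_iff hp hQc hd).1 hP, hfix⟩⟩
  invFun ρ := ⟨c * ρ.1, by
    have hd := disjoint_of_fix ρ.2.2
    exact ⟨(pOrder_mul_iff hp hQc hd).2 ρ.2.1, cycleOf_mul_fix hc ρ.2.2⟩⟩
  left_inv σ := Subtype.ext (mul_inv_cancel_left c σ.1)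
  right_inv ρ := Subtype.ext (inv_mul_cancel_left c ρ.1)

lemma fiber_card (hp : p.Prime) (hc : c = 1 ∨ (c.IsCycle ∧ x₀ ∈ c.support))
    (hQc : ∃ k, orderOf c = p ^ k) :
    Nat.card {σ : Equiv.Perm α // (∃ k, orderOf σ = p ^ k) ∧ σ.cycleOf x₀ = c}
      = pPowerOrderCount p (Fintype.card α - (insert x₀ c.support).card) := by
  rw [Nat.card_congr ((cycleFiberEquiv hp hc hQc).trans (fixEquiv (insert x₀ c.support)))]
  rw [count_eq]
  congr 1
  rw [Fintype.card_subtype_compl]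
  congr 1
  rw [← Fintype.card_coe (insert x₀ c.support)]
  try exact Fintype.card_congr (Equiv.subtypeEquivRight (fun x => by simp [Equiv.Perm.mem_support]))

end Fiber

section Master

lemma cycleThrough_card {α : Type*} [Fintype α] [DecidableEq α] (x₀ : α) {d : ℕ} (hd : 2 ≤ d) :
    Nat.card {c : Equiv.Perm α // c.IsCycle ∧ x₀ ∈ c.support ∧ c.support.card = d}
      = (Fintype.card α - 1).descFactorial (d-1) := by
  rw [Nat.card_congr (cycleThroughEquiv x₀ d hd), Nat.card_eq_fintype_card,
    Fintype.card_embedding_eq, Fintype.card_fin]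
  congr 1
  rw [Fintype.card_subtype_compl, Fintype.card_subtype_eq]

lemma count_succ (hp : p.Prime) (n : ℕ) :
    pPowerOrderCount p (n+1) = ∑ d ∈ Finset.range (n+2),
      (if ∃ k : ℕ, d = p ^ k then n.descFactorial (d-1) * pPowerOrderCount p (n+1-d) else 0) := by
  classical
  set α := Fin (n+1)
  set x₀ : α := 0 with hx₀
  set P : Equiv.Perm α → Prop := fun σ => ∃ k : ℕ, orderOf σ = p ^ k with hP
  set R : Equiv.Perm α → Prop :=
    fun c => (c = 1 ∨ (c.IsCycle ∧ x₀ ∈ c.support)) ∧ (∃ k : ℕ, orderOf c = p ^ k) with hR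
  set C : Finset (Equiv.Perm α) := Finset.univ.filter R with hC
  have hLHS : pPowerOrderCount p (n+1)
      = (Finset.univ.filter P).card := by
    rw [pPowerOrderCount, Nat.card_eq_fintype_card, Fintype.card_subtype]
  -- each p-power σ's cycleOf lands in C
  have hmapsto : ∀ σ ∈ Finset.univ.filter P, σ.cycleOf x₀ ∈ C := by
    intro σ hσ
    rw [Finset.mem_filter] at hσ ⊢
    refine ⟨Finset.mem_univ _, ?_, ?_⟩
    · by_cases h : σ x₀ = x₀
      · exact Or.inl ((Equiv.Perm.cycleOf_eq_one_iff σ).2 h)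
      · exact Or.inr ⟨Equiv.Perm.isCycle_cycleOf σ h,
          Equiv.Perm.mem_support_cycleOf_iff.2 ⟨Equiv.Perm.SameCycle.refl _ _,
            Equiv.Perm.mem_support.2 h⟩⟩
    · exact Q_of_dvd hp hσ.2 (Equiv.Perm.orderOf_cycleOf_dvd_orderOf σ x₀)
  -- fiber decomposition
  have hfibers := Finset.card_eq_sum_card_fiberwise hmapsto
  rw [hLHS, hfibers]
  -- each fiber has the right cardinality
  have hfibcard : ∀ c ∈ C, (Finset.filter (fun σ => σ.cycleOf x₀ = c) (Finset.univ.filter P)).card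
      = pPowerOrderCount p (n + 1 - (insert x₀ c.support).card) := by
    intro c hc
    rw [Finset.mem_filter] at hc
    have : (Finset.filter (fun σ => σ.cycleOf x₀ = c) (Finset.univ.filter P)).card
        = Nat.card {σ : Equiv.Perm α // P σ ∧ σ.cycleOf x₀ = c} := by
      rw [Nat.card_eq_fintype_card, Fintype.card_subtype, Finset.filter_filter]
    rw [this, fiber_card hp hc.2.1 hc.2.2, Fintype.card_fin]
  rw [Finset.sum_congr rfl hfibcard]
  -- group by the size of the cycle through x₀
  have hddrange : ∀ c ∈ C, (insert x₀ c.support).card ∈ Finset.range (n+2) := by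
    intro c _
    rw [Finset.mem_range]
    have h1 : (insert x₀ c.support).card ≤ Fintype.card α := by
      simpa using Finset.card_le_univ (insert x₀ c.support)
    have h2 : Fintype.card α = n+1 := Fintype.card_fin _
    omega
  rw [← Finset.sum_fiberwise_of_maps_to hddrange]
  refine Finset.sum_congr rfl fun d hd => ?_
  -- inner sum is constant on each fiber
  have hconst : ∀ c ∈ C.filter (fun c => (insert x₀ c.support).card = d),
      pPowerOrderCount p (n + 1 - (insert x₀ c.support).card)
        = pPowerOrderCount p (n + 1 - d) := by
    intro c hc
    rw [(Finset.mem_filter.1 hc).2]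
  rw [Finset.sum_congr rfl hconst, Finset.sum_const, smul_eq_mul]
  -- count the fiber of cycles
  have horder : ∀ c, R c → orderOf c = (insert x₀ c.support).card := by
    intro c hc
    rcases hc.1 with rfl | ⟨hcyc, hx⟩
    · simp
    · rw [Finset.insert_eq_self.2 hx, hcyc.orderOf]
  by_cases hQd : ∃ k : ℕ, d = p ^ k
  · rw [if_pos hQd]
    congr 1
    rcases Nat.lt_or_ge d 2 with hd2 | hd2
    · -- d = 0 or 1 ; only d = 1 possible (p-power), fiber is {1}
      have hd1 : d = 1 := by
        obtain ⟨k, rfl⟩ := hQd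
        have := Nat.one_le_pow k p hp.pos
        omega
      subst hd1
      have : C.filter (fun c => (insert x₀ c.support).card = 1) = {1} := by
        ext c
        rw [Finset.mem_filter, Finset.mem_singleton]
        constructor
        · rintro ⟨hcC, hcard⟩
          rw [hC, Finset.mem_filter] at hcC
          rcases hcC.2.1 with rfl | ⟨hcyc, hx⟩
          · rfl
          · exfalso
            rw [Finset.insert_eq_self.2 hx] at hcard
            have := hcyc.two_le_card_support
            omega
        · rintro rfl
          refine ⟨?_, by simp⟩
          rw [hC, Finset.mem_filter]
          exact ⟨Finset.mem_univ _, Or.inl rfl, ⟨0, by simp⟩⟩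
      rw [this]
      simp
    · -- d ≥ 2 : fiber is the set of d-cycles through x₀
      have hset : C.filter (fun c => (insert x₀ c.support).card = d)
          = Finset.univ.filter (fun c : Equiv.Perm α =>
              c.IsCycle ∧ x₀ ∈ c.support ∧ c.support.card = d) := by
        ext c
        simp only [Finset.mem_filter, hC, Finset.mem_univ, true_and]
        constructor
        · rintro ⟨⟨hor, hQc⟩, hcard⟩
          rcases hor with rfl | ⟨hcyc, hx⟩
          · exfalso
            simp at hcard
            omega
          · rw [Finset.insert_eq_self.2 hx] at hcard
            exact ⟨hcyc, hx, hcard⟩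
        · rintro ⟨hcyc, hx, hcard⟩
          rw [Finset.insert_eq_self.2 hx]
          refine ⟨⟨Or.inr ⟨hcyc, hx⟩, ?_⟩, hcard⟩
          rw [hcyc.orderOf, hcard]
          exact hQd
      rw [hset]
      have : (Finset.univ.filter (fun c : Equiv.Perm α =>
          c.IsCycle ∧ x₀ ∈ c.support ∧ c.support.card = d)).card
          = Nat.card {c : Equiv.Perm α // c.IsCycle ∧ x₀ ∈ c.support ∧ c.support.card = d} := by
        rw [Nat.card_eq_fintype_card, Fintype.card_subtype]
      rw [this, cycleThrough_card x₀ hd2, Fintype.card_fin]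
      simp
  · rw [if_neg hQd]
    have : C.filter (fun c => (insert x₀ c.support).card = d) = ∅ := by
      rw [Finset.filter_eq_empty_iff]
      intro c hcC hcard
      rw [hC, Finset.mem_filter] at hcC
      exact hQd (hcard ▸ (horder c hcC.2 ▸ hcC.2.2))
    rw [this]
    simp
end Master

end AuxCombinatorial

section AuxAnalytic

open PowerSeries Finset


open PowerSeries Finset


lemma coeff_pow_eq_zero {A : PowerSeries ℚ} (hA : PowerSeries.constantCoeff A = 0)
    {j k : ℕ} (h : j < k) : PowerSeries.coeff j (A ^ k) = 0 := by
  have hX : (PowerSeries.X : PowerSeries ℚ) ^ k ∣ A ^ k :=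
    pow_dvd_pow_of_dvd (PowerSeries.X_dvd_iff.2 hA) k
  exact PowerSeries.X_pow_dvd_iff.1 hX j h

lemma deriv_expComp (A : PowerSeries ℚ) (hA : PowerSeries.constantCoeff A = 0) :
    d⁄dX ℚ (expComp A) = (d⁄dX ℚ A) * expComp A := by
  ext n
  rw [PowerSeries.coeff_derivative, PowerSeries.coeff_mul]
  have key : ∀ k : ℕ, PowerSeries.coeff (n+1) (A ^ k) * ((n:ℚ)+1)
      = (k : ℚ) * PowerSeries.coeff n (A ^ (k-1) * d⁄dX ℚ A) := by
    intro k
    have hd : d⁄dX ℚ (A ^ k) = k • (A ^ (k-1) * d⁄dX ℚ A) := by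
      rw [Derivation.leibniz_pow, smul_eq_mul]
    have h1 := PowerSeries.coeff_derivative (A ^ k) n
    rw [hd, map_nsmul, nsmul_eq_mul] at h1
    push_cast at h1 ⊢
    linarith [h1]
  have hL : (PowerSeries.coeff (n+1) (expComp A)) * ((n:ℚ)+1)
      = ∑ i ∈ range (n+1), PowerSeries.coeff n (A ^ i * d⁄dX ℚ A) / (i.factorial : ℚ) := by
    rw [expComp, PowerSeries.coeff_mk, Finset.sum_mul]
    have step : ∀ k ∈ range (n+2),
        PowerSeries.coeff (n+1) (A ^ k) / (k.factorial : ℚ) * ((n:ℚ)+1)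
          = (k : ℚ) * PowerSeries.coeff n (A ^ (k-1) * d⁄dX ℚ A) / (k.factorial : ℚ) := by
      intro k _
      rw [div_mul_eq_mul_div, key k]
    rw [Finset.sum_congr rfl step, Finset.sum_range_succ']
    simp only [Nat.cast_zero, zero_mul, zero_div, add_zero]
    refine Finset.sum_congr rfl fun i _ => ?_
    have : ((i:ℚ)+1) * PowerSeries.coeff n (A ^ i * d⁄dX ℚ A) / ((i+1).factorial : ℚ)
        = PowerSeries.coeff n (A ^ i * d⁄dX ℚ A) / (i.factorial : ℚ) := by
      rw [Nat.factorial_succ]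
      push_cast
      rw [div_eq_div_iff]
      · ring
      · positivity
      · positivity
    simpa using this
  have hR : ∑ x ∈ Finset.HasAntidiagonal.antidiagonal n,
        PowerSeries.coeff x.1 (d⁄dX ℚ A) * PowerSeries.coeff x.2 (expComp A)
      = ∑ i ∈ range (n+1), PowerSeries.coeff n (A ^ i * d⁄dX ℚ A) / (i.factorial : ℚ) := by
    have hF : ∀ x ∈ Finset.HasAntidiagonal.antidiagonal n, PowerSeries.coeff x.1 (d⁄dX ℚ A) *
          PowerSeries.coeff x.2 (expComp A)
        = ∑ i ∈ range (n+1),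
            PowerSeries.coeff x.1 (d⁄dX ℚ A) * PowerSeries.coeff x.2 (A ^ i)
              / (i.factorial : ℚ) := by
      intro x hx
      have hx2 : x.2 ≤ n := by
        have := Finset.HasAntidiagonal.mem_antidiagonal.1 hx
        omega
      rw [expComp, PowerSeries.coeff_mk, Finset.mul_sum]
      rw [Finset.sum_subset (Finset.range_subset_range.2 (by omega : x.2 + 1 ≤ n + 1))]
      · exact Finset.sum_congr rfl fun i _ => by ring
      · intro i _ hi
        have : x.2 < i := by simp only [Finset.mem_range] at hi ⊢; omega
        rw [coeff_pow_eq_zero hA this, zero_div, mul_zero]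
    rw [Finset.sum_congr rfl hF, Finset.sum_comm]
    refine Finset.sum_congr rfl fun i _ => ?_
    rw [← Finset.sum_div, ← PowerSeries.coeff_mul, mul_comm]
  rw [hL, hR]

lemma constantCoeff_AH (p : ℕ) : PowerSeries.constantCoeff (artinHasseArg p) = 0 := by
  rw [← PowerSeries.coeff_zero_eq_constantCoeff, artinHasseArg, PowerSeries.coeff_mk]
  split <;> simp

lemma coeff_zero_expComp (A : PowerSeries ℚ) : PowerSeries.coeff 0 (expComp A) = 1 := by
  rw [expComp, PowerSeries.coeff_mk]
  simp

lemma AH_recurrence (p : ℕ) (hp : p.Prime) (n : ℕ) :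
    PowerSeries.coeff (n+1) (expComp (artinHasseArg p)) * ((n:ℚ)+1) =
      ∑ d ∈ range (n+2), (if ∃ k : ℕ, d = p ^ k then
        PowerSeries.coeff (n+1-d) (expComp (artinHasseArg p)) else 0) := by
  have h := congrArg (PowerSeries.coeff n) (deriv_expComp (artinHasseArg p) (constantCoeff_AH p))
  rw [PowerSeries.coeff_derivative, PowerSeries.coeff_mul,
    Finset.Nat.sum_antidiagonal_eq_sum_range_succ_mk] at h
  have hd : ∀ u : ℕ, PowerSeries.coeff u (d⁄dX ℚ (artinHasseArg p))
      = if ∃ k : ℕ, u + 1 = p ^ k then 1 else 0 := by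
    intro u
    rw [PowerSeries.coeff_derivative, artinHasseArg, PowerSeries.coeff_mk]
    split
    · push_cast
      rw [one_div, inv_mul_cancel₀]
      positivity
    · rw [zero_mul]
  rw [Finset.sum_range_succ']
  have h0 : (if ∃ k : ℕ, (0:ℕ) = p ^ k then
      PowerSeries.coeff (n+1-0) (expComp (artinHasseArg p)) else 0) = 0 := by
    rw [if_neg]
    rintro ⟨k, hk⟩
    exact (pow_ne_zero k hp.pos.ne') hk.symm
  rw [h0, add_zero]
  push_cast at h
  rw [h]
  refine Finset.sum_congr rfl fun i _ => ?_
  rw [hd i, ite_mul, one_mul, zero_mul]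
  simp [Nat.succ_sub_succ]

end AuxAnalytic

lemma pPowerOrderCount_zero (p : ℕ) : pPowerOrderCount p 0 = 1 := by
  rw [pPowerOrderCount]
  haveI : Unique {σ : Equiv.Perm (Fin 0) // ∃ k : ℕ, orderOf σ = p ^ k} :=
    { default := ⟨1, ⟨0, by simp⟩⟩
      uniq := fun a => Subtype.ext (Equiv.ext (fun x => x.elim0)) }
  exact Nat.card_unique

/-- The Artin–Hasse series `E_p(x) = exp (∑_{n ≥ 0} x^{p^n}/p^n)`
is the exponential generating function of the numbers `t_{p,n}` of permutations in
`S_n` of `p`-power order:  `E_p(x) = ∑_{n ≥ 0} (t_{p,n}/n!) x^n` in `ℚ[[x]]`. -/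
theorem artinHasse_egf (p : ℕ) (hp : p.Prime) :
    expComp (artinHasseArg p) =
      PowerSeries.mk fun n => (pPowerOrderCount p n : ℚ) / (n.factorial : ℚ) := by
  ext n
  rw [PowerSeries.coeff_mk]
  induction n using Nat.strong_induction_on with
  | _ n ih =>
    match n with
    | 0 =>
      rw [coeff_zero_expComp, pPowerOrderCount_zero]
      simp
    | (m+1) =>
      have hrec := AH_recurrence p hp m
      have hm1 : ((m:ℚ)+1) ≠ 0 := by positivity
      have hsub : ∀ d ∈ Finset.range (m+2),
          (if ∃ k : ℕ, d = p ^ k then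
            PowerSeries.coeff (m+1-d) (expComp (artinHasseArg p)) else 0)
          = (if ∃ k : ℕ, d = p ^ k then
            (pPowerOrderCount p (m+1-d) : ℚ) / ((m+1-d).factorial : ℚ) else 0) := by
        intro d hd
        split
        next h =>
          obtain ⟨k, rfl⟩ := h
          have h1 : 1 ≤ p ^ k := Nat.one_le_pow _ _ hp.pos
          exact ih (m+1-p^k) (by omega)
        next => rfl
      rw [Finset.sum_congr rfl hsub] at hrec
      have hcomb : (pPowerOrderCount p (m+1) : ℚ) / (((m+1).factorial : ℕ) : ℚ) * ((m:ℚ)+1)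
          = ∑ d ∈ Finset.range (m+2), (if ∃ k : ℕ, d = p ^ k then
              (pPowerOrderCount p (m+1-d) : ℚ) / ((m+1-d).factorial : ℚ) else 0) := by
        have hnat := count_succ hp m
        have hcast : (pPowerOrderCount p (m+1) : ℚ)
            = ∑ d ∈ Finset.range (m+2), (if ∃ k : ℕ, d = p ^ k then
                ((m.descFactorial (d-1) : ℕ) : ℚ) * (pPowerOrderCount p (m+1-d) : ℚ) else 0) := by
          rw [hnat]
          push_cast
          rfl
        have hstep1 : (pPowerOrderCount p (m+1) : ℚ) / (((m+1).factorial : ℕ) : ℚ) * ((m:ℚ)+1)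
            = (pPowerOrderCount p (m+1) : ℚ) / ((m.factorial : ℕ) : ℚ) := by
          rw [Nat.factorial_succ]
          have hmf : ((m.factorial : ℕ) : ℚ) ≠ 0 := by positivity
          push_cast
          field_simp
        rw [hstep1, hcast, Finset.sum_div]
        refine Finset.sum_congr rfl fun d hd => ?_
        rw [Finset.mem_range] at hd
        split
        next h =>
          obtain ⟨k, hk⟩ := h
          have hd1 : 1 ≤ d := hk ▸ Nat.one_le_pow _ _ hp.pos
          have hle : d - 1 ≤ m := by omega
          have hfac : ((m+1-d).factorial) * m.descFactorial (d-1) = m.factorial := by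
            have h2 := Nat.factorial_mul_descFactorial hle
            have h3 : m - (d-1) = m+1-d := by omega
            rwa [h3] at h2
          have hdf : ((m.descFactorial (d-1) : ℕ) : ℚ) ≠ 0 := by
            have : m.descFactorial (d-1) ≠ 0 := by
              intro h0
              rw [h0, mul_zero] at hfac
              exact (Nat.factorial_ne_zero m) hfac.symm
            exact_mod_cast this
          rw [← hfac]
          push_cast
          rw [mul_comm ((m.descFactorial (d-1) : ℚ)) _, mul_div_mul_right _ _ hdf]
        next => rw [zero_div]
      have hfinal := hrec.trans hcomb.symm
      exact mul_right_cancel₀ hm1 hfinal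
end

section
/- Let p be a prime and let K be a complete nonarchimedean normed field that is a normed ℚ_p-algebra (the norm extending the p-adic absolute value). For x ∈ K with |x| < 1, let E_p(x) := Σ_{n ≥ 0} (t_{p,n}/n!) x^n, where t_{p,n} is the number of permutations in S_n of p-power order; this series converges. Then for every real r with 0 < r < 1 and all x, y ∈ K with |x| ≤ r and |y| ≤ r, one has |E_p(x) − E_p(y) − (x − y)| ≤ r · |x − y|. -/
/-- The Artin–Hasse series `E_p(x) = ∑_{n ≥ 0} (t_{p,n}/n!) x^n` evaluated at an
element `x` of a complete nonarchimedean normed `ℚ_p`-algebra `K` (convergent for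
`‖x‖ < 1` since the coefficients are `p`-integral). -/
noncomputable def artinHasse (p : ℕ) [Fact p.Prime] (K : Type*) [NormedField K]
    [NormedAlgebra ℚ_[p] K] (x : K) : K :=
  ∑' n : ℕ,
    algebraMap ℚ_[p] K ((pPowerOrderCount p n : ℚ_[p]) / (n.factorial : ℚ_[p])) * x ^ n

open Finset

variable {p : ℕ}

lemma exists_p_decomp (hp : p.Prime) {G : Type*} [Group G] (g : G) (hg : IsOfFinOrder g) :
    ∃ u s : G, u * s = g ∧ Commute u s ∧ (∃ k, orderOf u = p ^ k) ∧ ¬ p ∣ orderOf s := by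
  set n := orderOf g with hn
  have hn0 : n ≠ 0 := (orderOf_pos_iff.mpr hg).ne'
  set a := n.factorization p with ha
  set m := n / p ^ a with hm
  have hcopm : Nat.Coprime p m := Nat.coprime_ordCompl hp hn0
  have hco : Nat.Coprime (p ^ a) m := Nat.Coprime.pow_left _ hcopm
  have hnm : p ^ a * m = n := Nat.ordProj_mul_ordCompl_eq_self n p
  obtain ⟨c, hc1, hc2⟩ := Nat.chineseRemainder hco 1 0
  obtain ⟨d, hd1, hd2⟩ := Nat.chineseRemainder hco 0 1
  refine ⟨g ^ c, g ^ d, ?_, Commute.pow_pow_self g c d, ?_, ?_⟩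
  · rw [← pow_add]
    have h1 : c + d ≡ 1 [MOD p ^ a * m] := by
      rw [← Nat.modEq_and_modEq_iff_modEq_mul hco]
      exact ⟨by simpa using hc1.add hd1, by simpa using hc2.add hd2⟩
    rw [hnm] at h1
    have := pow_eq_pow_iff_modEq.mpr h1
    simpa using this
  · have hdvd : orderOf (g ^ c) ∣ p ^ a := by
      rw [orderOf_dvd_iff_pow_eq_one, ← pow_mul, ← orderOf_dvd_iff_pow_eq_one]
      have hmc : m ∣ c := (Nat.modEq_zero_iff_dvd).mp hc2
      calc n = p ^ a * m := hnm.symm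
        _ ∣ p ^ a * c := mul_dvd_mul_left _ hmc
        _ = c * p ^ a := mul_comm _ _
    obtain ⟨k, _, hk⟩ := (Nat.dvd_prime_pow hp).mp hdvd
    exact ⟨k, hk⟩
  · have hdvd : orderOf (g ^ d) ∣ m := by
      rw [orderOf_dvd_iff_pow_eq_one, ← pow_mul, ← orderOf_dvd_iff_pow_eq_one]
      have hpd : p ^ a ∣ d := (Nat.modEq_zero_iff_dvd).mp hd1
      calc n = p ^ a * m := hnm.symm
        _ ∣ d * m := mul_dvd_mul_right hpd m
    intro hpdvd
    have hpm : p ∣ m := hpdvd.trans hdvd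
    exact hp.one_lt.ne' (Nat.eq_one_of_dvd_one (hcopm ▸ Nat.dvd_gcd dvd_rfl hpm))

lemma p_decomp_pow_eq (hp : p.Prime) {G : Type*} [Group G] {u s : G}
    (hcomm : Commute u s) (hu : ∃ k, orderOf u = p ^ k) (hs : ¬ p ∣ orderOf s)
    {c : ℕ} (hc1 : c ≡ 1 [MOD p ^ ((orderOf (u * s)).factorization p)])
    (hc2 : c ≡ 0 [MOD (orderOf (u * s) / p ^ ((orderOf (u * s)).factorization p))]) :
    (u * s) ^ c = u := by
  obtain ⟨k, hk⟩ := hu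
  have hs0 : orderOf s ≠ 0 := fun h => hs (h ▸ dvd_zero p)
  have hcop : Nat.Coprime (orderOf u) (orderOf s) := by
    rw [hk]; exact Nat.Coprime.pow_left _ ((Nat.Prime.coprime_iff_not_dvd hp).mpr hs)
  have hord : orderOf (u * s) = orderOf u * orderOf s :=
    hcomm.orderOf_mul_eq_mul_orderOf_of_coprime hcop
  have hfact : (orderOf (u * s)).factorization p = k := by
    rw [hord, hk, Nat.factorization_mul (pow_ne_zero _ hp.pos.ne') hs0]
    simp [hp.factorization_pow, Nat.factorization_eq_zero_of_not_dvd hs]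
  have hcompl : (orderOf (u * s) / p ^ ((orderOf (u * s)).factorization p)) = orderOf s := by
    rw [hfact, hord, hk, Nat.mul_div_cancel_left _ (pow_pos hp.pos _)]
  rw [hcomm.mul_pow]
  have h1 : u ^ c = u := by
    rw [hfact, ← hk] at hc1
    simpa using pow_eq_pow_iff_modEq.mpr hc1
  have h2 : s ^ c = 1 := by
    rw [hcompl] at hc2
    exact orderOf_dvd_iff_pow_eq_one.mp (Nat.modEq_zero_iff_dvd.mp hc2) ▸ rfl
  rw [h1, h2, mul_one]

lemma p_decomp_unique (hp : p.Prime) {G : Type*} [Group G] {u s u' s' : G}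
    (hcomm : Commute u s) (hu : ∃ k, orderOf u = p ^ k) (hs : ¬ p ∣ orderOf s)
    (hcomm' : Commute u' s') (hu' : ∃ k, orderOf u' = p ^ k) (hs' : ¬ p ∣ orderOf s')
    (heq : u * s = u' * s') : u = u' ∧ s = s' := by
  have hn0 : orderOf (u * s) ≠ 0 := by
    obtain ⟨k, hk⟩ := hu
    have hs0 : orderOf s ≠ 0 := fun h => hs (h ▸ dvd_zero p)
    have hcop : Nat.Coprime (orderOf u) (orderOf s) := by
      rw [hk]; exact Nat.Coprime.pow_left _ ((Nat.Prime.coprime_iff_not_dvd hp).mpr hs)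
    rw [hcomm.orderOf_mul_eq_mul_orderOf_of_coprime hcop]
    exact Nat.mul_ne_zero (hk ▸ pow_ne_zero _ hp.pos.ne') hs0
  have hco : Nat.Coprime (p ^ ((orderOf (u * s)).factorization p))
      ((orderOf (u * s) / p ^ ((orderOf (u * s)).factorization p))) :=
    Nat.Coprime.pow_left _ (Nat.coprime_ordCompl hp hn0)
  obtain ⟨c, hc1, hc2⟩ := Nat.chineseRemainder hco 1 0
  have h1 : (u * s) ^ c = u := p_decomp_pow_eq hp hcomm hu hs hc1 hc2
  have h2 : (u' * s') ^ c = u' := by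
    refine p_decomp_pow_eq hp hcomm' hu' hs' ?_ ?_ <;> rw [← heq] <;> assumption
  have huu : u = u' := by rw [← h1, heq, h2]
  refine ⟨huu, ?_⟩
  have := heq
  rw [huu] at this
  exact mul_left_cancel this

noncomputable def pElemCount (p : ℕ) (G : Type*) [Group G] : ℕ :=
  Nat.card {x : G // ∃ k : ℕ, orderOf x = p ^ k}

open Classical in
lemma pElemCount_eq_card_filter (p : ℕ) (G : Type*) [Group G] [Fintype G] :
    pElemCount p G = (univ.filter fun x : G => ∃ k, orderOf x = p ^ k).card := by
  rw [pElemCount, Nat.card_eq_fintype_card, Fintype.card_subtype]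

open Classical in
lemma pElemCount_subgroup (p : ℕ) {G : Type*} [Group G] [Fintype G] (H : Subgroup G) :
    pElemCount p ↥H = (univ.filter fun u : G => (∃ k, orderOf u = p ^ k) ∧ u ∈ H).card := by
  rw [pElemCount, Nat.card_eq_fintype_card, ← Fintype.card_subtype]
  refine Fintype.card_congr ⟨fun x => ⟨x.1.1, by simpa [Subgroup.orderOf_coe] using x.2, x.1.2⟩,
    fun u => ⟨⟨u.1, u.2.2⟩, by simpa [Subgroup.orderOf_mk] using u.2.1⟩, fun x => by ext; rfl,
    fun u => by ext; rfl⟩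

open Classical in
lemma card_eq_sum_pElem (hp : p.Prime) (G : Type*) [Group G] [Fintype G] :
    Fintype.card G =
      ∑ s ∈ univ.filter (fun s : G => ¬ p ∣ orderOf s),
        (univ.filter fun u : G => (∃ k, orderOf u = p ^ k) ∧ Commute u s).card := by
  classical
  set T : Finset (G × G) :=
    univ.filter (fun q : G × G =>
      (∃ k, orderOf q.1 = p ^ k) ∧ ¬ p ∣ orderOf q.2 ∧ Commute q.1 q.2) with hTdef
  have hT : T.card = Fintype.card G := by
    rw [← Finset.card_univ]
    apply Finset.card_bij (fun q _ => q.1 * q.2)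
    · intros; exact mem_univ _
    · rintro q hq q' hq' h
      simp only [hTdef, mem_filter] at hq hq'
      obtain ⟨h1, h2⟩ :=
        p_decomp_unique hp hq.2.2.2 hq.2.1 hq.2.2.1 hq'.2.2.2 hq'.2.1 hq'.2.2.1 h
      exact Prod.ext h1 h2
    · intro g _
      obtain ⟨u, s, h1, h2, h3, h4⟩ := exists_p_decomp hp g (isOfFinOrder_of_finite g)
      exact ⟨(u, s), by simp [hTdef, h3, h4, h2], h1⟩
  rw [← hT, Finset.card_eq_sum_card_fiberwise (f := fun q : G × G => q.2)
        (t := univ.filter (fun s : G => ¬ p ∣ orderOf s))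
        (fun q hq => by simp only [hTdef, mem_filter, Finset.mem_coe] at hq ⊢; exact ⟨mem_univ _, hq.2.2.1⟩)]
  apply Finset.sum_congr rfl
  intro s hs
  apply Finset.card_bij (fun q _ => q.1)
  · intro q hq
    simp only [hTdef, mem_filter] at hq ⊢
    obtain ⟨⟨_, h1, _, h3⟩, h4⟩ := hq
    exact ⟨mem_univ _, h1, h4 ▸ h3⟩
  · rintro q hq q' hq' h
    simp only [mem_filter] at hq hq'
    exact Prod.ext h (hq.2.trans hq'.2.symm)
  · intro u hu
    simp only [mem_filter] at hu hs
    exact ⟨(u, s), by simp [hTdef, hu.2.1, hu.2.2, hs.2], rfl⟩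

open Classical in
lemma card_filter_conj {G : Type*} [Group G] [Fintype G] {s t : G} (h : IsConj s t) :
    (univ.filter fun u : G => (∃ k, orderOf u = p ^ k) ∧ Commute u s).card
      = (univ.filter fun u : G => (∃ k, orderOf u = p ^ k) ∧ Commute u t).card := by
  obtain ⟨g, hg⟩ := isConj_iff.mp h
  have horder : ∀ u : G, orderOf ((MulAut.conj g) u) = orderOf u := fun u =>
    orderOf_injective (MulAut.conj g).toMonoidHom (MulAut.conj g).injective u
  apply Finset.card_bij (fun u _ => (MulAut.conj g) u)
  · intro u hu
    simp only [mem_filter] at hu ⊢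
    refine ⟨mem_univ _, by rw [horder]; exact hu.2.1, ?_⟩
    have := hu.2.2.map (MulAut.conj g)
    rwa [show (MulAut.conj g) s = t by simp [MulAut.conj_apply, hg]] at this
  · intro u _ u' _ hh
    exact (MulAut.conj g).injective hh
  · intro v hv
    simp only [mem_filter] at hv
    refine ⟨(MulAut.conj g).symm v, ?_, by simp; group⟩
    simp only [mem_filter]
    refine ⟨mem_univ _, ?_, ?_⟩
    · have : orderOf ((MulAut.conj g).symm v) = orderOf v := by
        conv_rhs => rw [← MulEquiv.apply_symm_apply (MulAut.conj g) v]
        rw [horder]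
      rw [this]; exact hv.2.1
    · have := hv.2.2.map (MulAut.conj g).symm
      rwa [show (MulAut.conj g).symm t = s by
        rw [← hg]; simp [MulAut.conj_symm_apply]; group] at this

open Classical MulAction in
lemma card_conjugates_mul_card_centralizer {G : Type*} [Group G] [Fintype G] (s : G) :
    (univ.filter fun t : G => IsConj s t).card * Fintype.card ↥(Subgroup.centralizer {s})
      = Fintype.card G := by
  have h1 : (univ.filter fun t : G => IsConj s t).card
      = Fintype.card ↥(orbit (ConjAct G) s) := by
    rw [Fintype.card_subtype]
    apply Finset.card_bij (fun t _ => t)  -- maybe deprecated; use card_nbij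
    · intro t ht; simp only [mem_filter, Set.mem_setOf_eq] at ht ⊢
      exact ⟨mem_univ _, show t ∈ orbit (ConjAct G) s from ConjAct.mem_orbit_conjAct.mpr ht.2.symm⟩
    · intro _ _ _ _ h; exact h
    · intro t ht
      simp only [mem_filter] at ht
      refine ⟨t, ?_, rfl⟩
      simp only [mem_filter]
      have : t ∈ orbit (ConjAct G) s := ht.2
      exact ⟨mem_univ _, (ConjAct.mem_orbit_conjAct.mp this).symm⟩
  have h2 : Fintype.card ↥(Subgroup.centralizer {s})
      = Fintype.card ↥(stabilizer (ConjAct G) s) := by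
    apply Fintype.card_congr
    refine ⟨fun x => ⟨ConjAct.toConjAct x.1, ?_⟩, fun y => ⟨ConjAct.ofConjAct y.1, ?_⟩,
      fun x => by ext; simp, fun y => by ext; simp⟩
    · have hiff := SetLike.ext_iff.mp (Subgroup.centralizer_eq_comap_stabilizer s) ↑x
      exact Subgroup.mem_comap.mp (hiff.mp x.2)
    · have : ConjAct.ofConjAct y.1 ∈ Subgroup.centralizer {s} := by
        have hiff := SetLike.ext_iff.mp (Subgroup.centralizer_eq_comap_stabilizer s) (ConjAct.ofConjAct y.1)
        exact hiff.mpr (Subgroup.mem_comap.mpr y.2)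
      exact this
  rw [h1, h2, ← ConjAct.card (G := G)]
  exact card_orbit_mul_card_stabilizer_eq_card_group (ConjAct G) s

/-- The subgroup of central elements of order prime to `p`. -/
def centerPPrime (hp : p.Prime) (G : Type*) [Group G] : Subgroup G where
  carrier := {s | s ∈ Subgroup.center G ∧ ¬ p ∣ orderOf s}
  one_mem' := ⟨Subgroup.one_mem _, by
    rw [orderOf_one]
    exact fun h => hp.one_lt.ne' (Nat.eq_one_of_dvd_one h)⟩
  mul_mem' := by
    rintro a b ⟨ha, ha'⟩ ⟨hb, hb'⟩
    refine ⟨Subgroup.mul_mem _ ha hb, fun hdvd => ?_⟩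
    have hcomm : Commute a b := (Subgroup.mem_center_iff.mp ha b).symm
    have h1 : orderOf (a * b) ∣ orderOf a * orderOf b :=
      hcomm.orderOf_mul_dvd_lcm.trans (Nat.lcm_dvd_mul _ _)
    rcases hp.dvd_mul.mp (hdvd.trans h1) with h | h
    exacts [ha' h, hb' h]
  inv_mem' := by
    rintro a ⟨ha, ha'⟩
    exact ⟨Subgroup.inv_mem _ ha, by rwa [orderOf_inv]⟩

lemma mem_centerPPrime {hp : p.Prime} {G : Type*} [Group G] {s : G} :
    s ∈ centerPPrime hp G ↔ s ∈ Subgroup.center G ∧ ¬ p ∣ orderOf s := Iff.rfl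

theorem frobenius_pPow_aux {p : ℕ} (hp : p.Prime) :
    ∀ (N : ℕ) (G : Type u) [Group G] [Fintype G],
      Fintype.card G = N → p ^ (N.factorization p) ∣ pElemCount p G := by
  intro N
  induction N using Nat.strong_induction_on with
  | _ N IH =>
    intro G _ _ hcard
    classical
    set a := N.factorization p with ha
    set f : G → ℕ :=
      fun s => (univ.filter fun u : G => (∃ k, orderOf u = p ^ k) ∧ Commute u s).card with hf
    set S' : Finset G := univ.filter (fun s : G => ¬ p ∣ orderOf s) with hS'
    have hsum : N = ∑ s ∈ S', f s := hcard ▸ card_eq_sum_pElem hp G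
    rw [← Finset.sum_filter_add_sum_filter_not S' (· ∈ Subgroup.center G) f] at hsum
    -- central part
    have hcentral : ∑ s ∈ S'.filter (· ∈ Subgroup.center G), f s
        = (S'.filter (· ∈ Subgroup.center G)).card * pElemCount p G := by
      rw [Finset.sum_congr rfl (fun s hs => ?_), Finset.sum_const, smul_eq_mul]
      simp only [mem_filter] at hs
      rw [pElemCount_eq_card_filter]
      show (univ.filter fun u : G => (∃ k, orderOf u = p ^ k) ∧ Commute u s).card = _
      congr 1
      apply Finset.filter_congr
      intro u _
      simp only [and_iff_left_iff_imp]
      exact fun _ => Subgroup.mem_center_iff.mp hs.2 u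
    -- noncentral part
    have hnoncentral : p ^ a ∣ ∑ s ∈ S'.filter (¬ · ∈ Subgroup.center G), f s := by
      set Snc := S'.filter (¬ · ∈ Subgroup.center G) with hSnc
      set κ : G → Finset G := fun s => univ.filter (fun t => IsConj s t) with hκ
      rw [← Finset.sum_fiberwise_of_maps_to (g := κ) (t := Snc.image κ)
        (fun x hx => mem_image_of_mem _ hx) f]
      apply Finset.dvd_sum
      intro c hc
      obtain ⟨s₀, hs₀, rfl⟩ := Finset.mem_image.mp hc
      simp only [hSnc, hS', mem_filter, mem_univ, true_and] at hs₀
      have horbit : Snc.filter (fun s => κ s = κ s₀) = κ s₀ := by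
        ext t
        simp only [hSnc, hS', hκ, mem_filter, mem_univ, true_and]
        constructor
        · rintro ⟨⟨h1, h2⟩, h3⟩
          have ht : t ∈ univ.filter (fun r => IsConj t r) :=
            mem_filter.mpr ⟨mem_univ _, IsConj.refl t⟩
          rw [show (univ.filter (fun r => IsConj t r)) = univ.filter (fun r => IsConj s₀ r)
            from h3] at ht
          simpa using ht
        · intro hconj
          obtain ⟨g, hg⟩ := isConj_iff.mp hconj
          have hord : orderOf t = orderOf s₀ := by
            rw [← hg]
            exact orderOf_injective (MulAut.conj g).toMonoidHom (MulAut.conj g).injective s₀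
          refine ⟨⟨hord ▸ hs₀.1, fun htc => ?_⟩, ?_⟩
          · apply hs₀.2
            have hcomm := Subgroup.mem_center_iff.mp htc g
            have hst : s₀ = t := by
              have h2 : g⁻¹ * (t * g) = s₀ := by rw [← hg]; group
              rw [← hcomm] at h2
              rw [← h2]; group
            rw [hst]; exact htc
          · ext r
            simp only [mem_filter, mem_univ, true_and]
            exact ⟨fun h => hconj.trans h, fun h => hconj.symm.trans h⟩
      rw [horbit, Finset.sum_congr rfl
        (fun t ht => show f t = f s₀ from
          (card_filter_conj (by simpa [hκ] using ht)).symm),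
        Finset.sum_const, smul_eq_mul]
      have horb := card_conjugates_mul_card_centralizer (G := G) s₀
      set cC := Fintype.card ↥(Subgroup.centralizer ({s₀} : Set G)) with hcC
      have horb2 : (κ s₀).card * cC = N := by rw [← hcard]; exact horb
      have hcCpos : 0 < cC := Fintype.card_pos
      have h2le : 2 ≤ (κ s₀).card := by
        refine Finset.one_lt_card.mpr ?_
        obtain ⟨g, hg⟩ := not_forall.mp (fun hall => hs₀.2 (Subgroup.mem_center_iff.mpr hall))
        refine ⟨s₀, mem_filter.mpr ⟨mem_univ _, IsConj.refl s₀⟩, g * s₀ * g⁻¹, ?_, ?_⟩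
        · simp only [hκ, mem_filter, mem_univ, true_and]
          exact isConj_iff.mpr ⟨g, rfl⟩
        · intro heq
          apply hg
          have h5 : s₀ * g = g * s₀ := by
            conv_lhs => rw [heq]
            group
          exact h5.symm
      have hlt : cC < N := by
        calc cC = 1 * cC := (one_mul _).symm
          _ < 2 * cC := by omega
          _ ≤ (κ s₀).card * cC := Nat.mul_le_mul_right _ h2le
          _ = N := horb2
      have hκpos : (κ s₀).card ≠ 0 :=
        (Finset.card_pos.mpr ⟨s₀, mem_filter.mpr ⟨mem_univ _, IsConj.refl s₀⟩⟩).ne'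
      have hfacts : a = ((κ s₀).card).factorization p + cC.factorization p := by
        rw [ha, ← horb2, Nat.factorization_mul hκpos hcCpos.ne']
        simp
      have hIH := IH cC hlt ↥(Subgroup.centralizer ({s₀} : Set G)) rfl
      rw [pElemCount_subgroup] at hIH
      have hfeq : (univ.filter fun u : G =>
          (∃ k, orderOf u = p ^ k) ∧ u ∈ Subgroup.centralizer ({s₀} : Set G)).card = f s₀ := by
        show _ = (univ.filter fun u : G => (∃ k, orderOf u = p ^ k) ∧ Commute u s₀).card
        congr 1
        apply Finset.filter_congr
        intro u _
        simp only [Subgroup.mem_centralizer_singleton_iff]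
        rfl
      rw [hfeq] at hIH
      rw [hfacts, pow_add]
      exact mul_dvd_mul (Nat.ordProj_dvd _ _) hIH
    -- conclude
    have hdvdN : p ^ a ∣ N := Nat.ordProj_dvd N p
    set zc := (S'.filter (· ∈ Subgroup.center G)).card with hzc
    rw [hcentral] at hsum
    have hdvd2 : p ^ a ∣ zc * pElemCount p G := by
      have h1 : p ^ a ∣ zc * pElemCount p G
          + ∑ s ∈ S'.filter (¬ · ∈ Subgroup.center G), f s := hsum ▸ hdvdN
      simpa using Nat.dvd_sub h1 hnoncentral
    have hzcount : zc = Fintype.card ↥(centerPPrime hp G) := by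
      rw [hzc, Fintype.card_subtype]
      congr 1
      ext s
      simp only [hS', mem_filter, mem_univ, true_and, mem_centerPPrime]
      exact and_comm
    have hpz : ¬ p ∣ zc := by
      intro hdvd
      haveI := Fact.mk hp
      rw [hzcount] at hdvd
      obtain ⟨g, hg⟩ := exists_prime_orderOf_dvd_card p hdvd
      have hmem := (mem_centerPPrime (hp := hp)).mp g.2
      apply hmem.2
      rw [← Subgroup.orderOf_coe g] at hg
      rw [hg]
    have hco : Nat.Coprime (p ^ a) zc :=
      Nat.Coprime.pow_left _ ((Nat.Prime.coprime_iff_not_dvd hp).mpr hpz)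
    have := Nat.Coprime.dvd_of_dvd_mul_left hco hdvd2
    exact this

theorem ppow_dvd_pPowerOrderCount {p : ℕ} (hp : p.Prime) (n : ℕ) :
    p ^ ((n.factorial).factorization p) ∣ pPowerOrderCount p n := by
  have h := frobenius_pPow_aux hp (Fintype.card (Equiv.Perm (Fin n))) (Equiv.Perm (Fin n)) rfl
  have hc : Fintype.card (Equiv.Perm (Fin n)) = n.factorial := by
    rw [Fintype.card_perm, Fintype.card_fin]
  rw [hc] at h
  exact h

lemma coeff_norm_le_one (p : ℕ) [hp : Fact p.Prime] (n : ℕ) :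
    ‖((pPowerOrderCount p n : ℚ_[p]) / (n.factorial : ℚ_[p]))‖ ≤ 1 := by
  obtain ⟨w, hw⟩ := ppow_dvd_pPowerOrderCount hp.out n
  set a := (n.factorial).factorization p with hadef
  set u := n.factorial / p ^ a with hudef
  have hu : n.factorial = p ^ a * u := (Nat.ordProj_mul_ordCompl_eq_self _ _).symm
  have hpu : ¬ p ∣ u := Nat.not_dvd_ordCompl hp.out (Nat.factorial_ne_zero n)
  have hpne : ((p : ℚ_[p]) ^ a) ≠ 0 := pow_ne_zero _ (Nat.cast_ne_zero.mpr hp.out.pos.ne')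
  have hcast : ((pPowerOrderCount p n : ℚ_[p]) / (n.factorial : ℚ_[p]))
      = (w : ℚ_[p]) / (u : ℚ_[p]) := by
    rw [hw, hu]
    push_cast
    rw [mul_div_mul_left _ _ hpne]
  rw [hcast, norm_div]
  have h1 : ‖(w : ℚ_[p])‖ ≤ 1 := by
    have := Padic.norm_int_le_one (p := p) (w : ℤ)
    simpa using this
  have h2 : ‖(u : ℚ_[p])‖ = 1 := by
    have hle : ‖(u : ℚ_[p])‖ ≤ 1 := by
      have := Padic.norm_int_le_one (p := p) (u : ℤ)
      simpa using this
    have hlt : ¬ ‖(u : ℚ_[p])‖ < 1 := by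
      intro hlt
      have : (p : ℤ) ∣ (u : ℤ) := by
        rw [← Padic.norm_intCast_lt_one_iff]
        simpa using hlt
      exact hpu (Int.natCast_dvd_natCast.mp this)
    linarith [lt_or_eq_of_le hle |>.resolve_left hlt]
  rw [h2, div_one]
  exact h1

lemma norm_tsum_le_of_le {K : Type*} [SeminormedAddCommGroup K] [IsUltrametricDist K]
    {f : ℕ → K} (hf : Summable f) {B : ℝ} (hB : 0 ≤ B) (h : ∀ n, ‖f n‖ ≤ B) :
    ‖∑' n, f n‖ ≤ B :=
  le_of_tendsto' hf.hasSum.norm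
    (fun s => IsUltrametricDist.norm_sum_le_of_forall_le_of_nonneg hB (fun i _ => h i))

/-- For `0 < r < 1` and `‖x‖ ≤ r`, `‖y‖ ≤ r`,
`‖E_p(x) - E_p(y) - (x - y)‖ ≤ r · ‖x - y‖`. -/
theorem artinHasse_sub_linear_bound (p : ℕ) [Fact p.Prime]
    (K : Type*) [NormedField K] [IsUltrametricDist K] [CompleteSpace K]
    [NormedAlgebra ℚ_[p] K]
    (r : ℝ) (hr0 : 0 < r) (hr1 : r < 1)
    (x y : K) (hx : ‖x‖ ≤ r) (hy : ‖y‖ ≤ r) :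
    ‖artinHasse p K x - artinHasse p K y - (x - y)‖ ≤ r * ‖x - y‖ := by
  set c : ℕ → K :=
    fun n => algebraMap ℚ_[p] K ((pPowerOrderCount p n : ℚ_[p]) / (n.factorial : ℚ_[p]))
    with hc
  have hcnorm : ∀ n, ‖c n‖ ≤ 1 := fun n => by
    rw [hc]
    calc ‖algebraMap ℚ_[p] K ((pPowerOrderCount p n : ℚ_[p]) / (n.factorial : ℚ_[p]))‖
        = ‖((pPowerOrderCount p n : ℚ_[p]) / (n.factorial : ℚ_[p]))‖ := norm_algebraMap' K _
      _ ≤ 1 := coeff_norm_le_one p n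
  -- summability
  have hsummable : ∀ z : K, ‖z‖ ≤ r → Summable (fun n => c n * z ^ n) := by
    intro z hz
    apply Summable.of_norm_bounded (g := fun n => r ^ n) (summable_geometric_of_lt_one hr0.le hr1)
    intro n
    rw [norm_mul, norm_pow]
    calc ‖c n‖ * ‖z‖ ^ n ≤ 1 * r ^ n := by
          apply mul_le_mul (hcnorm n) (pow_le_pow_left₀ (norm_nonneg z) hz n)
            (pow_nonneg (norm_nonneg z) n) zero_le_one
      _ = r ^ n := one_mul _
  have hsx := hsummable x hx
  have hsy := hsummable y hy
  set F : ℕ → K := fun n => c n * x ^ n - c n * y ^ n with hF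
  have hFsum : Summable F := hsx.sub hsy
  have hsub : artinHasse p K x - artinHasse p K y = ∑' n, F n := by
    rw [artinHasse, artinHasse, ← Summable.tsum_sub hsx hsy]
  have hc1 : c 1 = 1 := by
    have hcount : pPowerOrderCount p 1 = 1 := by
      rw [pPowerOrderCount]
      have hall : ∀ σ : Equiv.Perm (Fin 1), σ = 1 := fun σ =>
        Equiv.ext fun i => Subsingleton.elim _ _
      haveI : Unique {σ : Equiv.Perm (Fin 1) // ∃ k : ℕ, orderOf σ = p ^ k} := by
        refine ⟨⟨⟨1, 0, by simp⟩⟩, fun a => ?_⟩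
        exact Subtype.ext ((hall _).trans (hall _).symm)
      exact Nat.card_unique
    rw [hc]
    simp [hcount]
  have hF1 : F 1 = x - y := by
    rw [hF]
    simp [hc1]
  have hkey : artinHasse p K x - artinHasse p K y - (x - y)
      = ∑' n, (if n = 1 then 0 else F n) := by
    rw [hsub, Summable.tsum_eq_add_tsum_ite hFsum 1, hF1]
    ring
  rw [hkey]
  -- bound each term
  have hGsum : Summable (fun n => if n = 1 then (0 : K) else F n) := by
    have heq : (fun n => if n = 1 then (0 : K) else F n)
        = fun n => F n - (if n = 1 then F 1 else 0) := by
      funext n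
      rcases eq_or_ne n 1 with rfl | hn
      · simp
      · simp [hn]
    rw [heq]
    exact hFsum.sub (hasSum_ite_eq 1 (F 1)).summable
  apply norm_tsum_le_of_le hGsum (by positivity)
  intro n
  rcases eq_or_ne n 1 with rfl | hn1
  · simp; positivity
  rcases Nat.eq_zero_or_pos n with rfl | hn0
  · simp only [if_neg hn1, hF]
    simp only [pow_zero, mul_one, sub_self, norm_zero]
    positivity
  -- n ≥ 2
  have hn2 : 2 ≤ n := by omega
  rw [if_neg hn1]
  have hxy : ‖x ^ n - y ^ n‖ ≤ r ^ (n - 1) * ‖x - y‖ := by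
    rw [← geom_sum₂_mul x y n, norm_mul]
    apply mul_le_mul_of_nonneg_right _ (norm_nonneg _)
    apply IsUltrametricDist.norm_sum_le_of_forall_le_of_nonneg (by positivity)
    intro i hi
    rw [Finset.mem_range] at hi
    rw [norm_mul, norm_pow, norm_pow]
    calc ‖x‖ ^ i * ‖y‖ ^ (n - 1 - i) ≤ r ^ i * r ^ (n - 1 - i) := by
          apply mul_le_mul (pow_le_pow_left₀ (norm_nonneg x) hx i)
            (pow_le_pow_left₀ (norm_nonneg y) hy _) (by positivity) (by positivity)
      _ = r ^ (i + (n - 1 - i)) := (pow_add r i _).symm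
      _ = r ^ (n - 1) := by congr 1; omega
  calc ‖F n‖ = ‖c n * (x ^ n - y ^ n)‖ := by rw [hF]; ring_nf
    _ = ‖c n‖ * ‖x ^ n - y ^ n‖ := norm_mul _ _
    _ ≤ 1 * (r ^ (n - 1) * ‖x - y‖) := by
        apply mul_le_mul (hcnorm n) hxy (norm_nonneg _) zero_le_one
    _ = r ^ (n - 1) * ‖x - y‖ := one_mul _
    _ ≤ r ^ 1 * ‖x - y‖ := by
        apply mul_le_mul_of_nonneg_right _ (norm_nonneg _)
        exact pow_le_pow_of_le_one hr0.le hr1.le (by omega)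
    _ = r * ‖x - y‖ := by rw [pow_one]
end
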